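/- Let α ∉ ℕ be a real number and k ∈ ℕ. Then the functions φ_l: ℝ → ℝ, φ_l(x) = (1+e^x)^{α−l} e^{lx}, for l = 0, 1, ..., k, are linearly independent over ℝ. -/

import Mathlib

open Real

theorem phi_linearIndependent (α : ℝ) (hα : ¬∃ n : ℕ, α = n) (k : ℕ) :
    LinearIndependent ℝ
      (fun l : Fin (k + 1) =>
        fun x : ℝ => (1 + Real.exp x) ^ (α - (l : ℕ)) * Real.exp ((l : ℕ) * x)) := by
  rw [Fintype.linearIndependent_iff]
  intro g hg
  set p : Polynomial ℝ := ∑ l : Fin (k+1), Polynomial.C (g l) * Polynomial.X ^ (l : ℕ) with hp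
  have hroot : ∀ t ∈ Set.Ioo (0:ℝ) 1, p.eval t = 0 := by
    intro t ht
    obtain ⟨ht0, ht1⟩ := ht
    have h1t : 0 < 1 - t := by linarith
    set x := Real.log (t / (1 - t)) with hx
    have hex : Real.exp x = t / (1 - t) := Real.exp_log (by positivity)
    have hpos : (0:ℝ) < 1 + Real.exp x := by positivity
    have hfrac : Real.exp x / (1 + Real.exp x) = t := by
      rw [hex]; field_simp; ring
    have key : ∀ l : ℕ, (1 + Real.exp x) ^ (α - l) * Real.exp (l * x)
        = (1 + Real.exp x) ^ α * t ^ l := by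
      intro l
      rw [Real.rpow_sub hpos, Real.exp_nat_mul, Real.rpow_natCast]
      rw [div_mul_eq_mul_div, mul_div_assoc, ← div_pow, hfrac]
    have hx0 := congrFun hg x
    simp only [Finset.sum_apply, Pi.smul_apply, smul_eq_mul, Pi.zero_apply] at hx0
    have hsum : (1 + Real.exp x) ^ α * ∑ l : Fin (k+1), g l * t ^ (l:ℕ) = 0 := by
      rw [Finset.mul_sum]
      rw [← hx0]
      congr 1
      ext l
      rw [key]
      ring
    have hαpos : (0:ℝ) < (1 + Real.exp x) ^ α := Real.rpow_pos_of_pos hpos α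
    have : ∑ l : Fin (k+1), g l * t ^ (l:ℕ) = 0 := by
      rcases mul_eq_zero.mp hsum with h | h
      · exact absurd h (ne_of_gt hαpos)
      · exact h
    rw [hp]
    simp only [Polynomial.eval_finset_sum, Polynomial.eval_mul, Polynomial.eval_C,
      Polynomial.eval_pow, Polynomial.eval_X]
    exact this
  have hp0 : p = 0 := by
    apply Polynomial.eq_zero_of_infinite_isRoot
    apply Set.Infinite.mono (s := Set.Ioo (0:ℝ) 1)
    · intro t ht; exact hroot t ht
    · exact Set.Ioo_infinite (by norm_num : (0:ℝ) < 1)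
  intro i
  have hc : p.coeff i = g i := by
    rw [hp, Polynomial.finset_sum_coeff]
    simp only [Polynomial.coeff_C_mul, Polynomial.coeff_X_pow]
    rw [Finset.sum_eq_single i]
    · simp
    · intro l _ hl
      have : (l:ℕ) ≠ (i:ℕ) := fun h => hl (Fin.ext h)
      simp only [if_neg (Ne.symm this), mul_zero]
    · simp
  rw [← hc, hp0, Polynomial.coeff_zero]
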